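/- The group with presentation ⟨b, c | cbc = bcb, [b, c³] = 1, (b⁻¹cb²)²c = 1⟩ is cyclic of order 5. -/

import Mathlib

/-- Generators: `b = of 0`, `c = of 1`. -/
def rels1 : Set (FreeGroup (Fin 2)) :=
  let b := FreeGroup.of (0 : Fin 2)
  let c := FreeGroup.of (1 : Fin 2)
  {c * b * c * (b * c * b)⁻¹,
   b * c ^ 3 * b⁻¹ * (c ^ 3)⁻¹,
   (b⁻¹ * c * b ^ 2) ^ 2 * c}

private lemma rels1_eq_one {r : FreeGroup (Fin 2)} (hr : r ∈ rels1) :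
    PresentedGroup.mk rels1 r = 1 := by
  have : r ∈ Subgroup.normalClosure rels1 := Subgroup.subset_normalClosure hr
  exact (QuotientGroup.eq_one_iff r).2 this

private lemma key : (PresentedGroup.of 1 : PresentedGroup rels1) = PresentedGroup.of 0 ∧
    (PresentedGroup.of 0 : PresentedGroup rels1) ^ 5 = 1 := by
  set B : PresentedGroup rels1 := PresentedGroup.of 0 with hB
  set C : PresentedGroup rels1 := PresentedGroup.of 1 with hC
  have h1 : C * B * C * (B * C * B)⁻¹ = 1 := by
    have := rels1_eq_one (r := FreeGroup.of 1 * FreeGroup.of 0 * FreeGroup.of 1 *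
      (FreeGroup.of 0 * FreeGroup.of 1 * FreeGroup.of 0)⁻¹) (by left; rfl)
    simp only [map_mul, map_inv] at this; exact this
  have h2 : B * C ^ 3 * B⁻¹ * (C ^ 3)⁻¹ = 1 := by
    have := rels1_eq_one (r := FreeGroup.of 0 * FreeGroup.of 1 ^ 3 * (FreeGroup.of 0)⁻¹ *
      ((FreeGroup.of 1) ^ 3)⁻¹) (by right; left; rfl)
    simp only [map_mul, map_inv, map_pow] at this; exact this
  have h3 : ((B)⁻¹ * C * B ^ 2) ^ 2 * C = 1 := by
    have := rels1_eq_one (r := ((FreeGroup.of 0)⁻¹ * FreeGroup.of 1 * (FreeGroup.of 0) ^ 2) ^ 2 *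
      FreeGroup.of 1) (by right; right; rfl)
    simp only [map_mul, map_inv, map_pow] at this; exact this
  -- braid relation
  have braid : C * B * C = B * C * B := by
    have := mul_eq_one_iff_eq_inv.mp h1
    rwa [inv_inv] at this
  -- c³ commutes with b
  have comm3 : B * C ^ 3 = C ^ 3 * B := by
    have := mul_eq_one_iff_eq_inv.mp h2
    rw [inv_inv] at this
    calc B * C ^ 3 = B * C ^ 3 * B⁻¹ * B := by group
    _ = C ^ 3 * B := by rw [this]
  -- step 1 : C * B^3 * C = 1
  have s1 : C * B ^ 3 * C = 1 := by
    have e : ((B)⁻¹ * C * B ^ 2) ^ 2 * C = B⁻¹ * (C * B * C) * B ^ 2 * C := by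
      rw [sq]; group
    rw [e, braid] at h3
    calc C * B ^ 3 * C = B⁻¹ * (B * C * B) * B ^ 2 * C := by group
    _ = 1 := h3
  -- B^3 = C⁻²
  have s2 : B ^ 3 = C⁻¹ * C⁻¹ := by
    calc B ^ 3 = C⁻¹ * (C * B ^ 3 * C) * C⁻¹ := by group
    _ = C⁻¹ * C⁻¹ := by rw [s1]; group
  -- B commutes with C
  have comm : B * C = C * B := by
    have hc : C = C ^ 3 * B ^ 3 := by rw [s2]; group
    have h4 : B * (C ^ 3 * B ^ 3) = C ^ 3 * B ^ 3 * B := by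
      calc B * (C ^ 3 * B ^ 3) = B * C ^ 3 * B ^ 3 := by group
      _ = C ^ 3 * B * B ^ 3 := by rw [comm3]
      _ = C ^ 3 * B ^ 3 * B := by group
    calc B * C = B * (C ^ 3 * B ^ 3) := by conv_lhs => rw [hc]
    _ = C ^ 3 * B ^ 3 * B := h4
    _ = C * B := by conv_rhs => rw [hc]
  -- C = B
  have hCB : C = B := by
    have : C * (C * B) = B * (C * B) := by
      rw [← comm, ← mul_assoc, braid, mul_assoc, comm]
    exact mul_right_cancel this
  have hB5 : B ^ 5 = 1 := by
    have : B ^ 3 = B⁻¹ * B⁻¹ := by rw [s2, hCB]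
    calc B ^ 5 = B ^ 3 * B * B := by group
    _ = 1 := by rw [this]; group
  exact ⟨hCB, hB5⟩

private def phi : PresentedGroup rels1 →* Multiplicative (ZMod 5) :=
  PresentedGroup.toGroup (f := fun _ => Multiplicative.ofAdd 1) (by
    intro r hr
    rcases hr with h | h | h <;> subst h <;>
      simp only [map_mul, map_inv, map_pow, FreeGroup.lift_apply_of] <;> decide)

theorem stmt_1 : IsCyclic (PresentedGroup rels1) ∧ Nat.card (PresentedGroup rels1) = 5 := by
  obtain ⟨hCB, hB5⟩ := key
  set B : PresentedGroup rels1 := PresentedGroup.of 0 with hB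
  have hBne : B ≠ 1 := by
    intro h
    have : phi B = 1 := by rw [h, map_one]
    rw [show phi B = Multiplicative.ofAdd 1 from PresentedGroup.toGroup.of _] at this
    exact absurd this (by decide)
  have horder : orderOf B = 5 := by
    have hdvd : orderOf B ∣ 5 := orderOf_dvd_of_pow_eq_one hB5
    rcases (Nat.prime_five).eq_one_or_self_of_dvd _ hdvd with h | h
    · exact absurd (orderOf_eq_one_iff.mp h) hBne
    · exact h
  have hrange : Set.range (PresentedGroup.of : Fin 2 → PresentedGroup rels1) = {B} := by
    ext x
    constructor
    · rintro ⟨i, rfl⟩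
      fin_cases i
      · rfl
      · exact hCB
    · rintro rfl
      exact ⟨0, rfl⟩
  have htop : Subgroup.zpowers B = ⊤ := by
    rw [Subgroup.zpowers_eq_closure, ← hrange, PresentedGroup.closure_range_of]
  constructor
  · refine ⟨⟨B, fun x => ?_⟩⟩
    have hx : x ∈ Subgroup.zpowers B := htop.symm ▸ Subgroup.mem_top x
    simpa [Subgroup.mem_zpowers_iff] using hx
  · rw [← Subgroup.card_top (G := PresentedGroup rels1), ← htop, Nat.card_zpowers, horder]
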